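/- For independent nonnegative real random variables v_1,...,v_n and any threshold τ ≥ 0, the expected reward of the single-threshold algorithm, STA(τ) = Σ_t P(max_{i<t} v_i < τ) · E[v_t · 1{v_t ≥ τ}], satisfies STA(τ) ≥ P(max_i v_i ≥ τ) · τ + P(max_i v_i < τ) · E[(max_i v_i − τ)^+], where x^+ = max(x,0). -/

import Mathlib

open MeasureTheory ProbabilityTheory

/-- Running maximum of the first `t` boxes (empty max is `0` by junk value of `iSup`). -/
noncomputable def pMax {Ω : Type*} (v : ℕ → Ω → ℝ) (t : ℕ) (ω : Ω) : ℝ :=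
  ⨆ i ∈ Finset.range t, v i ω

/-- fold-max version of the running maximum. -/
noncomputable def fMax {Ω : Type*} (v : ℕ → Ω → ℝ) (t : ℕ) (ω : Ω) : ℝ :=
  (Finset.range t).fold max 0 (fun i => v i ω)

lemma fMax_zero {Ω : Type*} (v : ℕ → Ω → ℝ) (ω : Ω) : fMax v 0 ω = 0 := rfl

lemma fMax_succ {Ω : Type*} (v : ℕ → Ω → ℝ) (t : ℕ) (ω : Ω) :
    fMax v (t + 1) ω = max (fMax v t ω) (v t ω) := by
  rw [fMax, Finset.range_add_one, Finset.fold_insert Finset.notMem_range_self, max_comm]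
  rfl

lemma fMax_nonneg {Ω : Type*} (v : ℕ → Ω → ℝ) (t : ℕ) (ω : Ω) : 0 ≤ fMax v t ω := by
  induction t with
  | zero => simp [fMax_zero]
  | succ t ih => rw [fMax_succ]; exact le_trans ih (le_max_left _ _)

lemma le_fMax {Ω : Type*} (v : ℕ → Ω → ℝ) {t i : ℕ} (hi : i < t) (ω : Ω) :
    v i ω ≤ fMax v t ω := by
  induction t with
  | zero => omega
  | succ t ih =>
    rw [fMax_succ]
    rcases Nat.lt_succ_iff_lt_or_eq.mp hi with h | h
    · exact le_trans (ih h) (le_max_left _ _)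
    · subst h; exact le_max_right _ _

lemma fMax_le {Ω : Type*} (v : ℕ → Ω → ℝ) {t : ℕ} {c : ℝ} {ω : Ω} (hc : 0 ≤ c)
    (h : ∀ i < t, v i ω ≤ c) : fMax v t ω ≤ c := by
  rw [fMax, Finset.fold_max_le]
  exact ⟨hc, fun i hi => h i (Finset.mem_range.mp hi)⟩

lemma pMax_eq_fMax {Ω : Type*} (v : ℕ → Ω → ℝ) (t : ℕ) (ω : Ω) :
    pMax v t ω = fMax v t ω := by
  unfold pMax
  apply le_antisymm
  · refine Real.iSup_le (fun i => ?_) (fMax_nonneg v t ω)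
    refine Real.iSup_le (fun hi => ?_) (fMax_nonneg v t ω)
    exact le_fMax v (Finset.mem_range.mp hi) ω
  · have hbdd : BddAbove (Set.range fun i => ⨆ _ : i ∈ Finset.range t, v i ω) := by
      refine ⟨fMax v t ω, ?_⟩
      rintro x ⟨i, rfl⟩
      refine Real.iSup_le (fun hi => le_fMax v (Finset.mem_range.mp hi) ω) (fMax_nonneg v t ω)
    rw [fMax]
    rw [Finset.fold_max_le]
    constructor
    · have := le_ciSup hbdd t
      have h0 : (⨆ _ : t ∈ Finset.range t, v t ω) = 0 := by
        rw [show (t ∈ Finset.range t) = False by simp, Real.iSup_of_isEmpty]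
      rw [h0] at this
      exact this
    · intro i hi
      have h1 : (⨆ _ : i ∈ Finset.range t, v i ω) = v i ω := ciSup_pos hi
      rw [← h1]
      exact le_ciSup hbdd i

lemma fMax_mono {Ω : Type*} (v : ℕ → Ω → ℝ) {s t : ℕ} (h : s ≤ t) (ω : Ω) :
    fMax v s ω ≤ fMax v t ω := by
  induction h with
  | refl => exact le_refl _
  | step h ih => exact ih.trans ((fMax_succ v _ ω) ▸ le_max_left _ _)

lemma fMax_measurable {Ω : Type*} [MeasurableSpace Ω] (v : ℕ → Ω → ℝ)
    (hmeas : ∀ i, Measurable (v i)) (t : ℕ) : Measurable (fMax v t) := by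
  induction t with
  | zero =>
    have : fMax v 0 = fun _ => (0:ℝ) := by funext ω; rfl
    rw [this]; exact measurable_const
  | succ t ih =>
    have : fMax v (t+1) = fun ω => max (fMax v t ω) (v t ω) := by
      funext ω; exact fMax_succ v t ω
    rw [this]; exact ih.max (hmeas t)

lemma fMax_lt_iff {Ω : Type*} (v : ℕ → Ω → ℝ) {τ : ℝ} (hτ : 0 < τ) (t : ℕ) (ω : Ω) :
    fMax v t ω < τ ↔ ∀ i < t, v i ω < τ := by
  constructor
  · intro h i hi
    exact lt_of_le_of_lt (le_fMax v hi ω) h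
  · intro h
    induction t with
    | zero => simpa [fMax_zero] using hτ
    | succ t ih =>
      rw [fMax_succ, max_lt_iff]
      exact ⟨ih (fun i hi => h i (hi.trans (Nat.lt_succ_self t))), h t (Nat.lt_succ_self t)⟩

/-- Pointwise: `(fMax n − τ)⁺ ≤ Σ_{t<n} (v t − τ)⁺`. -/
lemma fMax_pos_part_le {Ω : Type*} (v : ℕ → Ω → ℝ) {τ : ℝ} (hτ : 0 ≤ τ) (n : ℕ) (ω : Ω) :
    max (fMax v n ω - τ) 0 ≤ ∑ t ∈ Finset.range n, max (v t ω - τ) 0 := by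
  induction n with
  | zero => simp [fMax_zero]; linarith
  | succ n ih =>
    rw [fMax_succ, Finset.sum_range_succ]
    have h1 : ∀ t ∈ Finset.range n, (0:ℝ) ≤ max (v t ω - τ) 0 := fun t _ => le_max_right _ _
    have hs : (0:ℝ) ≤ ∑ t ∈ Finset.range n, max (v t ω - τ) 0 := Finset.sum_nonneg h1
    rw [max_le_iff]
    constructor
    · rw [sub_le_iff_le_add]
      rw [max_le_iff]
      constructor
      · have := ih
        rw [max_le_iff] at *
        nlinarith [le_max_left (fMax v n ω - τ) (0:ℝ), le_max_left (v n ω - τ) (0:ℝ),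
          le_max_right (v n ω - τ) (0:ℝ)]
      · nlinarith [le_max_left (v n ω - τ) (0:ℝ)]
    · positivity


/-- the single-threshold algorithm with threshold `τ` satisfies
`STA(τ) ≥ P(max ≥ τ)·τ + P(max < τ)·E[(max − τ)⁺]`. -/
theorem single_threshold_lower_bound
    {Ω : Type*} [MeasureSpace Ω] [IsProbabilityMeasure (ℙ : Measure Ω)]
    (n : ℕ) (v : ℕ → Ω → ℝ) (τ : ℝ) (hτ : 0 ≤ τ)
    (hmeas : ∀ i, Measurable (v i))
    (hnn : ∀ i ω, 0 ≤ v i ω)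
    (hint : ∀ i, Integrable (v i))
    (hindep : iIndepFun v ℙ) :
    (∑ t ∈ Finset.range n,
        (ℙ {ω | pMax v t ω < τ}).toReal *
          ∫ ω, Set.indicator {ω | τ ≤ v t ω} (v t) ω)
      ≥ (ℙ {ω | τ ≤ pMax v n ω}).toReal * τ
        + (ℙ {ω | pMax v n ω < τ}).toReal * ∫ ω, max (pMax v n ω - τ) 0 := by
  simp only [pMax_eq_fMax]
  -- measurability of basic sets
  have hSmeas : ∀ t, MeasurableSet {ω : Ω | τ ≤ v t ω} := fun t =>
    measurableSet_le measurable_const (hmeas t)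
  have hEmeas : ∀ t, MeasurableSet {ω : Ω | v t ω < τ} := fun t =>
    measurableSet_lt (hmeas t) measurable_const
  have hAmeas : ∀ t, MeasurableSet {ω : Ω | fMax v t ω < τ} := fun t =>
    measurableSet_lt (fMax_measurable v hmeas t) measurable_const
  rcases eq_or_lt_of_le hτ with hτ0 | hτpos
  · -- τ = 0 : RHS is 0, LHS nonneg
    subst hτ0
    have hempty : {ω : Ω | fMax v n ω < 0} = ∅ := by
      ext ω; simp [not_lt, fMax_nonneg]
    rw [hempty]
    simp only [measure_empty, ENNReal.toReal_zero, zero_mul, mul_zero, add_zero, zero_add]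
    refine Finset.sum_nonneg fun t _ => mul_nonneg ENNReal.toReal_nonneg ?_
    refine integral_nonneg fun ω => ?_
    exact Set.indicator_nonneg (fun ω _ => hnn t ω) ω
  -- abbreviations
  set q : ℕ → ℝ := fun t => (ℙ {ω : Ω | τ ≤ v t ω}).toReal with hq
  set b : ℕ → ℝ := fun t => (ℙ {ω : Ω | v t ω < τ}).toReal with hb
  set a : ℕ → ℝ := fun t => (ℙ {ω : Ω | fMax v t ω < τ}).toReal with ha
  set r : ℕ → ℝ := fun t => ∫ ω, max (v t ω - τ) 0 with hr
  -- b t = 1 - q t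
  have hbq : ∀ t, b t = 1 - q t := by
    intro t
    have hc : {ω : Ω | v t ω < τ} = {ω : Ω | τ ≤ v t ω}ᶜ := by
      ext ω; simp [not_le]
    have := measure_add_measure_compl (μ := ℙ) (hSmeas t)
    have h2 := congrArg ENNReal.toReal this
    rw [ENNReal.toReal_add (measure_ne_top _ _) (measure_ne_top _ _)] at h2
    simp only [measure_univ, ENNReal.toReal_one] at h2
    simp only [hb, hq, hc]
    linarith
  -- a t = ∏ b i  (independence)
  have haprod : ∀ t, a t = ∏ i ∈ Finset.range t, b i := by
    intro t
    have hset : {ω : Ω | fMax v t ω < τ} = ⋂ i ∈ Finset.range t, (v i ⁻¹' Set.Iio τ) := by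
      ext ω
      simp only [Set.mem_setOf_eq, Set.mem_iInter, Set.mem_preimage, Set.mem_Iio,
        Finset.mem_range]
      exact fMax_lt_iff v hτpos t ω
    have hprod := hindep.meas_biInter (S := Finset.range t)
      (s := fun i => v i ⁻¹' Set.Iio τ)
      (fun i _ => ⟨Set.Iio τ, measurableSet_Iio, rfl⟩)
    simp only [ha, hb, hset, hprod, ENNReal.toReal_prod]
    rfl
  -- telescoping: ∑_{t<m} a t * q t = 1 - a m
  have htel : ∀ m, ∑ t ∈ Finset.range m, a t * q t = 1 - a m := by
    intro m
    induction m with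
    | zero => simp [haprod 0]
    | succ m ih =>
      rw [Finset.sum_range_succ, ih, haprod (m+1), Finset.prod_range_succ, ← haprod m,
        hbq m]
      ring
  -- integral decomposition
  have hIdec : ∀ t, (∫ ω, Set.indicator {ω : Ω | τ ≤ v t ω} (v t) ω) = τ * q t + r t := by
    intro t
    have hpt : ∀ ω, Set.indicator {ω : Ω | τ ≤ v t ω} (v t) ω
        = Set.indicator {ω : Ω | τ ≤ v t ω} (fun _ => τ) ω + max (v t ω - τ) 0 := by
      intro ω
      by_cases h : τ ≤ v t ω
      · have hm : ω ∈ {ω : Ω | τ ≤ v t ω} := h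
        rw [Set.indicator_of_mem hm, Set.indicator_of_mem hm, max_eq_left (by linarith)]
        ring
      · have hm : ω ∉ {ω : Ω | τ ≤ v t ω} := h
        rw [Set.indicator_of_notMem hm, Set.indicator_of_notMem hm,
          max_eq_right (by simp only [Set.mem_setOf_eq, not_le] at h; linarith)]
        ring
    have hi1 : Integrable (Set.indicator {ω : Ω | τ ≤ v t ω} (fun _ => τ)) ℙ :=
      (integrable_const τ).indicator (hSmeas t)
    have hi2 : Integrable (fun ω => max (v t ω - τ) 0) ℙ :=
      ((hint t).sub (integrable_const τ)).pos_part
    calc (∫ ω, Set.indicator {ω : Ω | τ ≤ v t ω} (v t) ω)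
        = ∫ ω, (Set.indicator {ω : Ω | τ ≤ v t ω} (fun _ => τ) ω + max (v t ω - τ) 0) := by
          exact integral_congr_ae (Filter.Eventually.of_forall hpt)
      _ = (∫ ω, Set.indicator {ω : Ω | τ ≤ v t ω} (fun _ => τ) ω) + ∫ ω, max (v t ω - τ) 0 :=
          integral_add hi1 hi2
      _ = τ * q t + r t := by
          rw [integral_indicator_const τ (hSmeas t)]
          simp [hq, hr, mul_comm, measureReal_def]
  -- integrability of fMax and its positive part
  have hfint : ∀ t, Integrable (fMax v t) ℙ := by
    intro t
    induction t with
    | zero =>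
      have : fMax v 0 = fun _ => (0:ℝ) := by funext ω; rfl
      rw [this]; exact integrable_const 0
    | succ t ih =>
      have : fMax v (t+1) = fun ω => max (fMax v t ω) (v t ω) := by
        funext ω; exact fMax_succ v t ω
      rw [this]; exact ih.sup (hint t)
  have hRint : Integrable (fun ω => max (fMax v n ω - τ) 0) ℙ :=
    ((hfint n).sub (integrable_const τ)).pos_part
  -- R ≤ ∑ r t
  have hRle : (∫ ω, max (fMax v n ω - τ) 0) ≤ ∑ t ∈ Finset.range n, r t := by
    have hint' : ∀ t ∈ Finset.range n,
        Integrable (fun ω => max (v t ω - τ) 0) ℙ :=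
      fun t _ => ((hint t).sub (integrable_const τ)).pos_part
    have hsum := integral_finset_sum (μ := ℙ) (Finset.range n)
      (f := fun t ω => max (v t ω - τ) 0) hint'
    calc (∫ ω, max (fMax v n ω - τ) 0)
        ≤ ∫ ω, ∑ t ∈ Finset.range n, max (v t ω - τ) 0 :=
          integral_mono hRint (integrable_finset_sum _ hint')
            (fun ω => fMax_pos_part_le v hτ n ω)
      _ = ∑ t ∈ Finset.range n, r t := hsum
  -- a n ≤ a t for t ≤ n
  have hamono : ∀ t ≤ n, a n ≤ a t := by
    intro t htn
    refine ENNReal.toReal_mono (measure_ne_top _ _) (measure_mono ?_)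
    intro ω hω
    exact lt_of_le_of_lt (fMax_mono v htn ω) hω
  have hrnn : ∀ t, 0 ≤ r t := fun t => integral_nonneg (fun ω => le_max_right _ _)
  have hann : ∀ t, 0 ≤ a t := fun t => ENNReal.toReal_nonneg
  -- the complement identity for the RHS first factor
  have hcompl : (ℙ {ω : Ω | τ ≤ fMax v n ω}).toReal = 1 - a n := by
    have hc : {ω : Ω | τ ≤ fMax v n ω} = {ω : Ω | fMax v n ω < τ}ᶜ := by
      ext ω; simp [not_lt]
    have := measure_add_measure_compl (μ := ℙ) (hAmeas n)
    have h2 := congrArg ENNReal.toReal this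
    rw [ENNReal.toReal_add (measure_ne_top _ _) (measure_ne_top _ _)] at h2
    simp only [measure_univ, ENNReal.toReal_one] at h2
    rw [hc]
    simp only [ha] at *
    linarith
  -- put everything together
  have hLHS : (∑ t ∈ Finset.range n,
      a t * ∫ ω, Set.indicator {ω : Ω | τ ≤ v t ω} (v t) ω)
      = τ * (1 - a n) + ∑ t ∈ Finset.range n, a t * r t := by
    calc (∑ t ∈ Finset.range n, a t * ∫ ω, Set.indicator {ω : Ω | τ ≤ v t ω} (v t) ω)
        = ∑ t ∈ Finset.range n, (τ * (a t * q t) + a t * r t) := by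
          refine Finset.sum_congr rfl fun t _ => ?_
          rw [hIdec t]; ring
      _ = τ * ∑ t ∈ Finset.range n, a t * q t + ∑ t ∈ Finset.range n, a t * r t := by
          rw [Finset.sum_add_distrib, Finset.mul_sum]
      _ = τ * (1 - a n) + ∑ t ∈ Finset.range n, a t * r t := by rw [htel n]
  have hkey2 : a n * (∫ ω, max (fMax v n ω - τ) 0) ≤ ∑ t ∈ Finset.range n, a t * r t := by
    calc a n * (∫ ω, max (fMax v n ω - τ) 0)
        ≤ a n * ∑ t ∈ Finset.range n, r t := mul_le_mul_of_nonneg_left hRle (hann n)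
      _ = ∑ t ∈ Finset.range n, a n * r t := Finset.mul_sum _ _ _
      _ ≤ ∑ t ∈ Finset.range n, a t * r t := by
          refine Finset.sum_le_sum fun t ht => ?_
          exact mul_le_mul_of_nonneg_right (hamono t (Finset.mem_range.mp ht).le) (hrnn t)
  rw [ge_iff_le, hLHS, hcompl]
  have : (ℙ {ω : Ω | fMax v n ω < τ}).toReal = a n := rfl
  rw [this]
  linarith
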